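/- Let c, q ∈ ℝ satisfy c² + 2q > 0. Then there exist X > 0 and a nonconstant X-periodic twice continuously differentiable function T : ℝ → ℝ such that T″(x) + T(x)²/2 − c·T(x) = q for all x ∈ ℝ. -/

import Mathlib

open Set Metric

namespace Stmt7Aux

noncomputable section

/-- clamp to `[-M, M]` -/
def clamp (M t : ℝ) : ℝ := max (-M) (min M t)

lemma clamp_lip (M : ℝ) : LipschitzWith 1 (clamp M) := by
  refine LipschitzWith.of_dist_le_mul fun x y => ?_
  simp only [clamp, Real.dist_eq, NNReal.coe_one, one_mul]
  calc |max (-M) (min M x) - max (-M) (min M y)| ≤ |min M x - min M y| := by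
        rw [max_comm (-M) (min M x), max_comm (-M) (min M y)]
        exact abs_max_sub_max_le_abs _ _ _
    _ ≤ |x - y| := by
        calc |min M x - min M y| ≤ max |M - M| |x - y| := abs_min_sub_min_le_max _ _ _ _
          _ ≤ |x - y| := by simp

lemma clamp_eq {M t : ℝ} (h1 : -M ≤ t) (h2 : t ≤ M) : clamp M t = t := by
  rw [clamp, min_eq_right h2, max_eq_right h1]

lemma clamp_abs {M : ℝ} (hM : 0 ≤ M) (t : ℝ) : |clamp M t| ≤ M := by
  rw [abs_le, clamp]
  constructor
  · exact le_max_left _ _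
  · exact max_le (by linarith) (min_le_left _ _)

section Algebra
variable {c q s : ℝ} (hs : 0 < s) (hs2 : s^2 = c^2 + 2*q)

/-- the potential -/
def Vv (c q u : ℝ) : ℝ := u^3/6 - c*u^2/2 - q*u
/-- the force -/
def fv (c q u : ℝ) : ℝ := q + c*u - u^2/2

include hs2 in
lemma Vv_id (t : ℝ) : Vv c q (c + s + t) = Vv c q (c + s) + s*t^2/2 + t^3/6 := by
  simp only [Vv]
  linear_combination (t/2) * hs2

include hs2 in
lemma fv_id (t : ℝ) : fv c q (c + s + t) = -(s*t) - t^2/2 := by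
  simp only [fv]
  linear_combination (-(1/2)) * hs2

end Algebra

lemma Vv_cont (c q : ℝ) : Continuous (Vv c q) := by
  unfold Vv
  exact (((continuous_pow 3).div_const 6).sub
    ((continuous_const.mul (continuous_pow 2)).div_const 2)).sub
    (continuous_const.mul continuous_id)

lemma hasDerivAt_fst' {F : ℝ → ℝ × ℝ} {d : ℝ × ℝ} {x : ℝ} (h : HasDerivAt F d x) :
    HasDerivAt (fun y => (F y).1) d.1 x := by
  have h2 := (h.hasFDerivAt.fst).hasDerivAt
  simpa using h2

lemma hasDerivAt_snd' {F : ℝ → ℝ × ℝ} {d : ℝ × ℝ} {x : ℝ} (h : HasDerivAt F d x) :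
    HasDerivAt (fun y => (F y).2) d.2 x := by
  have h2 := (h.hasFDerivAt.snd).hasDerivAt
  simpa using h2

lemma hasDerivAt_Vv (c q z : ℝ) : HasDerivAt (Vv c q) (-(fv c q z)) z := by
  have h : HasDerivAt (fun z : ℝ => z^3/6 - c*z^2/2 - q*z)
      (((3:ℕ) * z^2)/6 - c*((2:ℕ)*z^1)/2 - q*1) z := by
    exact (((hasDerivAt_pow 3 z).div_const 6).sub
      (((hasDerivAt_pow 2 z).const_mul c).div_const 2)).sub ((hasDerivAt_id z).const_mul q)
  exact h.congr_deriv (by simp only [fv]; push_cast; ring)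

lemma energy_deriv {c q : ℝ} {u v : ℝ → ℝ} {x : ℝ}
    (hu : HasDerivAt u (v x) x) (hv : HasDerivAt v (fv c q (u x)) x) :
    HasDerivAt (fun y => (v y)^2/2 + Vv c q (u y)) 0 x := by
  have h1 : HasDerivAt (fun y => (v y)^2/2) (v x * fv c q (u x)) x := by
    have := (hv.pow 2).div_const 2
    exact this.congr_deriv (by push_cast; ring)
  have h2 : HasDerivAt (fun y => Vv c q (u y)) (-(fv c q (u x)) * v x) x :=
    (hasDerivAt_Vv c q (u x)).comp x hu
  have := h1.add h2
  exact this.congr_deriv (by ring)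

variable {E : Type*} [NormedAddCommGroup E] [NormedSpace ℝ E] [CompleteSpace E]

lemma global_unique {vf : E → E} {L : NNReal} (hL : LipschitzWith L vf)
    {F G : ℝ → E} (hF : ∀ x, HasDerivAt F (vf (F x)) x)
    (hG : ∀ x, HasDerivAt G (vf (G x)) x) {t₀ : ℝ} (heq : F t₀ = G t₀) : F = G := by
  funext x
  have hmem : t₀ ∈ Ioo (t₀ - |x - t₀| - 1) (t₀ + |x - t₀| + 1) := by
    constructor <;> [skip; skip] <;> nlinarith [abs_nonneg (x - t₀)]
  have := ODE_solution_unique_of_mem_Icc (v := fun _ => vf) (s := fun _ => univ)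
    (fun _ _ => hL.lipschitzOnWith (s := univ)) hmem
    (fun y _ => (hF y).continuousAt.continuousWithinAt)
    (fun y _ => hF y) (fun _ _ => mem_univ _)
    (fun y _ => (hG y).continuousAt.continuousWithinAt)
    (fun y _ => hG y) (fun _ _ => mem_univ _) heq
  exact this ⟨by nlinarith [abs_nonneg (x - t₀), le_abs_self (x - t₀), neg_abs_le (x - t₀)],
    by nlinarith [le_abs_self (x - t₀)]⟩

lemma global_solution (vf : E → E) (L : NNReal) (C : ℝ) (hL : LipschitzWith L vf)
    (hC : ∀ y, ‖vf y‖ ≤ C) (p : E) :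
    ∃ F : ℝ → E, F 0 = p ∧ ∀ x, HasDerivAt F (vf (F x)) x := by
  have hC0 : 0 ≤ C := le_trans (norm_nonneg _) (hC p)
  -- solutions on `Icc (-n) n`
  have hsol : ∀ n : ℕ, ∃ f : ℝ → E, f 0 = p ∧
      ∀ t ∈ Icc (-(n:ℝ)) n, HasDerivWithinAt f (vf (f t)) (Icc (-(n:ℝ)) n) t := by
    intro n
    have hCn : (0:ℝ) ≤ C * n + 1 := add_nonneg (mul_nonneg hC0 (Nat.cast_nonneg n)) zero_le_one
    have hpl : IsPicardLindelof (fun _ x => vf x) (tmin := -(n:ℝ)) (tmax := n)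
        ⟨0, by constructor <;> simp [Nat.cast_nonneg]⟩ p (C * n + 1).toNNReal 0 C.toNNReal L :=
      { lipschitzOnWith := fun _ _ => hL.lipschitzOnWith
        continuousOn := fun _ _ => continuousOn_const
        norm_le := fun _ _ x _ => by rw [Real.coe_toNNReal _ hC0]; exact hC x
        mul_max_le := by
          rw [Real.coe_toNNReal _ hC0, Real.coe_toNNReal _ hCn]
          simp only [sub_zero, zero_sub, neg_neg, max_self, NNReal.coe_zero]
          linarith }
    exact hpl.exists_eq_forall_mem_Icc_hasDerivWithinAt₀
  choose sol hsol0 hsolD using hsol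
  have key : ∀ (n : ℕ) (x : ℝ), |x| < n → HasDerivAt (sol n) (vf (sol n x)) x := by
    intro n x hx
    have hmem : x ∈ Ioo (-(n:ℝ)) n := ⟨neg_lt_of_abs_lt hx, lt_of_abs_lt hx⟩
    exact (hsolD n x (Ioo_subset_Icc_self hmem)).hasDerivAt (Icc_mem_nhds hmem.1 hmem.2)
  have agree : ∀ m n : ℕ, 1 ≤ m → m ≤ n → ∀ x : ℝ, |x| ≤ m → sol m x = sol n x := by
    intro m n hm hmn x hx
    have hm0 : (0:ℝ) < m := by exact_mod_cast hm
    have h0 : (0:ℝ) ∈ Ioo (-(m:ℝ)) m := ⟨by linarith, hm0⟩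
    have := ODE_solution_unique_of_mem_Icc (v := fun _ => vf) (s := fun _ => univ)
      (fun _ _ => hL.lipschitzOnWith (s := univ)) h0
      (fun y hy => ((hsolD m y hy).continuousWithinAt))
      (fun y hy => key m y (abs_lt.mpr ⟨hy.1, hy.2⟩)) (fun _ _ => mem_univ _)
      (fun y hy => ((hsolD n y (Icc_subset_Icc (by exact_mod_cast neg_le_neg (Nat.cast_le.mpr hmn)) (by exact_mod_cast hmn) hy)).continuousWithinAt.mono (Icc_subset_Icc (by exact_mod_cast neg_le_neg (Nat.cast_le.mpr hmn)) (by exact_mod_cast hmn))))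
      (fun y hy => key n y (lt_of_lt_of_le (abs_lt.mpr ⟨hy.1, hy.2⟩) (by exact_mod_cast hmn)))
      (fun _ _ => mem_univ _) ((hsol0 m).trans (hsol0 n).symm)
    exact this (abs_le.mp hx)
  refine ⟨fun x => sol (⌈|x|⌉₊ + 1) x, by simpa using hsol0 1, fun x => ?_⟩
  set N := ⌈|x|⌉₊ + 1 with hN
  have hxN : |x| < N := by
    have := Nat.le_ceil |x|
    rw [hN]
    push_cast
    linarith
  have hloc : ∀ y : ℝ, |y - x| < N - |x| → sol (⌈|y|⌉₊ + 1) y = sol N y := by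
    intro y hy
    have hyN : |y| < N := by
      have := abs_sub_abs_le_abs_sub y x
      linarith
    have hyM : |y| ≤ (⌈|y|⌉₊ + 1 : ℕ) := by
      have := Nat.le_ceil |y|
      push_cast
      linarith
    rcases le_total (⌈|y|⌉₊ + 1) N with hc | hc
    · exact agree _ N (by omega) hc y hyM
    · exact (agree N _ (by omega) hc y hyN.le).symm
  have hev : (fun y => sol (⌈|y|⌉₊ + 1) y) =ᶠ[nhds x] sol N := by
    have : ∀ᶠ y in nhds x, |y - x| < N - |x| := by
      have : Continuous fun y : ℝ => |y - x| := by continuity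
      have h2 : (0:ℝ) < N - |x| := by linarith
      exact (this.tendsto x).eventually_lt_const (by simpa using h2)
    exact this.mono fun y hy => hloc y hy
  have := (key N x hxN).congr_of_eventuallyEq hev
  rwa [hloc x (by simpa using sub_pos.mpr hxN)] at this

lemma fwd_invariant {b a E η : ℝ} {V u en : ℝ → ℝ}
    (hu : Continuous u) (hen : Continuous en) (hη : 0 < η)
    (hVmono : ∀ z, b - η < z → z < a + η → V z ≤ E → b ≤ z ∧ z ≤ a)
    (hVen : ∀ x, V (u x) ≤ en x)
    (hloc : ∀ x, b ≤ u x → u x ≤ a → en x ≤ E → ∀ᶠ y in nhds x, en y = en x)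
    (h0 : b ≤ u 0 ∧ u 0 ≤ a ∧ en 0 ≤ E) :
    ∀ x, 0 ≤ x → b ≤ u x ∧ u x ≤ a ∧ en x ≤ E := by
  intro x hx
  have hS : Icc (0:ℝ) x ⊆ {y | b ≤ u y ∧ u y ≤ a ∧ en y ≤ E} := by
    apply IsClosed.Icc_subset_of_forall_exists_gt
    · exact ((isClosed_le continuous_const hu).inter
        ((isClosed_le hu continuous_const).inter (isClosed_le hen continuous_const))).inter
        isClosed_Icc
    · exact ⟨h0.1, h0.2.1, h0.2.2⟩
    · rintro z ⟨⟨hz1, hz2, hz3⟩, _⟩ y hy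
      have h1 := hloc z hz1 hz2 hz3
      have h2 : ∀ᶠ w in nhds z, |u w - u z| < η := by
        have hc : Continuous fun w => |u w - u z| := by continuity
        have := (hc.tendsto z).eventually_lt_const (show |u z - u z| < η by simpa using hη)
        exact this
      obtain ⟨δ, hδ, hball⟩ := Metric.eventually_nhds_iff.mp (h1.and h2)
      set w := min y (z + δ/2) with hw
      have hwz : z < w := lt_min hy (by linarith)
      have hdist : dist w z < δ := by
        rw [Real.dist_eq, abs_lt]
        constructor
        · linarith
        · have : w ≤ z + δ/2 := min_le_right _ _
          linarith
      obtain ⟨hew, huw⟩ := hball hdist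
      have huw' : b ≤ u w ∧ u w ≤ a := by
        apply hVmono (u w) (by cases abs_lt.mp huw; linarith) (by cases abs_lt.mp huw; linarith)
        calc V (u w) ≤ en w := hVen w
          _ = en z := hew
          _ ≤ E := hz3
      exact ⟨w, ⟨huw'.1, huw'.2, by rw [hew]; exact hz3⟩, hwz, min_le_left _ _⟩
  exact hS ⟨hx, le_refl x⟩

lemma construct (c q b a E M η : ℝ)
    (hM0 : 0 < M) (hMb : -M < b) (haM : a < M) (hba : b ≤ a)
    (hv2M : ∀ w z : ℝ, b ≤ z → z ≤ a → w^2/2 + Vv c q z ≤ E → |w| < M)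
    (hη : 0 < η)
    (hVmono : ∀ z, b - η < z → z < a + η → Vv c q z ≤ E → b ≤ z ∧ z ≤ a)
    (hVaE : Vv c q a = E) :
    ∃ u v : ℝ → ℝ, u 0 = a ∧ v 0 = 0 ∧
      (∀ x, HasDerivAt u (v x) x) ∧ (∀ x, HasDerivAt v (fv c q (u x)) x) ∧
      (∀ x, b ≤ u x ∧ u x ≤ a) ∧
      (∀ x, (v x)^2/2 + Vv c q (u x) = E) ∧
      (∀ x₁, v x₁ = 0 → ∀ x, u (2*x₁ - x) = u x) := by
  -- the clamped vector field
  set vf : ℝ × ℝ → ℝ × ℝ := fun p => (clamp M p.2, fv c q (clamp M p.1)) with hvf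
  -- Lipschitz
  have hfvlip : LipschitzWith ((|c| + M).toNNReal) (fun t => fv c q (clamp M t)) := by
    apply LipschitzWith.of_dist_le_mul
    intro x y
    have h1 : dist (clamp M x) (clamp M y) ≤ dist x y := by
      simpa using (clamp_lip M).dist_le_mul x y
    set x' := clamp M x
    set y' := clamp M y
    have hx' : |x'| ≤ M := clamp_abs hM0.le x
    have hy' : |y'| ≤ M := clamp_abs hM0.le y
    have hfd : fv c q x' - fv c q y' = (x' - y') * (c - (x' + y')/2) := by
      simp only [fv]; ring
    rw [Real.dist_eq, hfd, abs_mul]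
    have h2 : |c - (x' + y')/2| ≤ |c| + M := by
      refine (abs_sub _ _).trans ?_
      have : |(x' + y')/2| ≤ M := by
        rw [abs_div]
        have := (abs_add_le x' y').trans (add_le_add hx' hy')
        rw [abs_two]
        linarith
      linarith
    calc |x' - y'| * |c - (x' + y')/2| ≤ |x' - y'| * (|c| + M) :=
          mul_le_mul_of_nonneg_left h2 (abs_nonneg _)
      _ ≤ dist x y * (|c| + M) := by
          apply mul_le_mul_of_nonneg_right _ (by positivity)
          rw [← Real.dist_eq]; exact h1
      _ = (|c| + M).toNNReal * dist x y := by
          rw [Real.coe_toNNReal _ (by positivity)]; ring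
  have hLip : LipschitzWith (max 1 ((|c| + M).toNNReal)) vf := by
    have h1 : LipschitzWith 1 (fun p : ℝ × ℝ => clamp M p.2) := by
      have := (clamp_lip M).comp (LipschitzWith.prod_snd (α := ℝ) (β := ℝ)); rwa [mul_one] at this
    have h2 : LipschitzWith ((|c| + M).toNNReal) (fun p : ℝ × ℝ => fv c q (clamp M p.1)) := by
      have := hfvlip.comp (LipschitzWith.prod_fst (α := ℝ) (β := ℝ)); rwa [mul_one] at this
    exact h1.prodMk h2
  -- bound
  have hbound : ∀ p : ℝ × ℝ, ‖vf p‖ ≤ max M (abs q + abs c * M + M^2/2) := by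
    intro p
    rw [Prod.norm_def]
    apply max_le_max
    · exact clamp_abs hM0.le p.2
    · set z := clamp M p.1
      have hz : |z| ≤ M := clamp_abs hM0.le p.1
      have hz2 : z^2 ≤ M^2 := by nlinarith [abs_nonneg z, neg_abs_le z, le_abs_self z]
      have hcz : |c*z| ≤ abs c * M := by
        rw [abs_mul]; exact mul_le_mul_of_nonneg_left hz (abs_nonneg c)
      show ‖q + c*z - z^2/2‖ ≤ abs q + abs c * M + M^2/2
      simp only [fv, Real.norm_eq_abs]
      rw [abs_le]
      constructor
      · nlinarith [neg_abs_le q, neg_abs_le (c*z), abs_nonneg (c*z), sq_nonneg z]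
      · nlinarith [le_abs_self q, le_abs_self (c*z), sq_nonneg z]
  obtain ⟨F, hF0, hFd⟩ := global_solution vf _ _ hLip hbound (a, 0)
  set u : ℝ → ℝ := fun x => (F x).1 with hu_def
  set v : ℝ → ℝ := fun x => (F x).2 with hv_def
  have hu0 : u 0 = a := by rw [hu_def]; simp [hF0]
  have hv0 : v 0 = 0 := by rw [hv_def]; simp [hF0]
  have hud : ∀ x, HasDerivAt u (clamp M (v x)) x := fun x => hasDerivAt_fst' (hFd x)
  have hvd : ∀ x, HasDerivAt v (fv c q (clamp M (u x))) x := fun x => hasDerivAt_snd' (hFd x)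
  have hu_cont : Continuous u := by
    apply continuous_iff_continuousAt.mpr
    exact fun x => (hud x).continuousAt
  have hv_cont : Continuous v := by
    apply continuous_iff_continuousAt.mpr
    exact fun x => (hvd x).continuousAt
  set en : ℝ → ℝ := fun x => (v x)^2/2 + Vv c q (u x) with hen_def
  have hen_cont : Continuous en := by
    have : Continuous (Vv c q) := by
      unfold Vv
      exact (((continuous_pow 3).div_const 6).sub
        ((continuous_const.mul (continuous_pow 2)).div_const 2)).sub
        (continuous_const.mul continuous_id)
    exact ((hv_cont.pow 2).div_const 2).add (this.comp hu_cont)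
  -- local energy conservation
  have hloc : ∀ x, b ≤ u x → u x ≤ a → en x ≤ E → ∀ᶠ y in nhds x, en y = en x := by
    intro x h1 h2 h3
    have huB : |u x| < M := by
      rw [abs_lt]; constructor <;> linarith
    have hvB : |v x| < M := hv2M (v x) (u x) h1 h2 h3
    have hev : ∀ᶠ y in nhds x, |u y| < M ∧ |v y| < M := by
      have e1 : ∀ᶠ y in nhds x, |u y| < M :=
        ((hu_cont.abs.tendsto x).eventually_lt_const huB)
      have e2 : ∀ᶠ y in nhds x, |v y| < M :=
        ((hv_cont.abs.tendsto x).eventually_lt_const hvB)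
      exact e1.and e2
    obtain ⟨δ, hδ, hball⟩ := Metric.eventually_nhds_iff.mp hev
    have hder : ∀ y, dist y x < δ → HasDerivAt en 0 y := by
      intro y hy
      obtain ⟨h4, h5⟩ := hball hy
      have hcu : clamp M (u y) = u y :=
        clamp_eq (by linarith [(abs_lt.mp h4).1]) (by linarith [(abs_lt.mp h4).2])
      have hcv : clamp M (v y) = v y :=
        clamp_eq (by linarith [(abs_lt.mp h5).1]) (by linarith [(abs_lt.mp h5).2])
      have huy : HasDerivAt u (v y) y := by have := hud y; rwa [hcv] at this
      have hvy : HasDerivAt v (fv c q (u y)) y := by have := hvd y; rwa [hcu] at this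
      exact energy_deriv huy hvy
    have hsub : Icc (x - δ/2) (x + δ/2) ⊆ {y | dist y x < δ} := by
      intro y hy
      rw [mem_setOf_eq, Real.dist_eq, abs_lt]
      obtain ⟨hy1, hy2⟩ := hy
      constructor <;> linarith
    have hc := constant_of_has_deriv_right_zero (f := en) (a := x - δ/2) (b := x + δ/2)
      (fun y hy => (hder y (hsub hy)).continuousAt.continuousWithinAt)
      (fun y hy => (hder y (hsub (Ico_subset_Icc_self hy))).hasDerivWithinAt)
    have hcx : ∀ y ∈ Icc (x - δ/2) (x + δ/2), en y = en x := by
      intro y hy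
      rw [hc y hy, ← hc x (by constructor <;> linarith)]
    filter_upwards [Metric.ball_mem_nhds x (by linarith : (0:ℝ) < δ/2)] with y hy
    apply hcx
    have := mem_ball.mp hy
    rw [Real.dist_eq] at this
    rw [abs_lt] at this
    constructor <;> linarith
  have hVen : ∀ x, Vv c q (u x) ≤ en x := by
    intro x
    rw [hen_def]
    nlinarith [sq_nonneg (v x)]
  have h0 : b ≤ u 0 ∧ u 0 ≤ a ∧ en 0 ≤ E := by
    refine ⟨by rw [hu0]; exact hba, by rw [hu0], ?_⟩
    rw [hen_def]; simp only [hu0, hv0, hVaE]; norm_num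
  have hinvp := fwd_invariant hu_cont hen_cont hη hVmono hVen hloc h0
  have hinvm := fwd_invariant (V := Vv c q) (hu_cont.comp continuous_neg)
      (hen_cont.comp continuous_neg) hη hVmono (fun x => hVen (-x))
      (fun x h1 h2 h3 => (continuous_neg.tendsto x).eventually
        (by simpa using hloc (-x) h1 h2 h3)) (by simpa using h0)
  have hinv : ∀ x, b ≤ u x ∧ u x ≤ a ∧ en x ≤ E := by
    intro x
    rcases le_total 0 x with hx | hx
    · exact hinvp x hx
    · have := hinvm (-x) (by linarith)
      simpa using this
  -- clamps are inactive
  have hcu : ∀ x, clamp M (u x) = u x := by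
    intro x
    obtain ⟨h1, h2, _⟩ := hinv x
    exact clamp_eq (by linarith) (by linarith)
  have hcv : ∀ x, clamp M (v x) = v x := by
    intro x
    obtain ⟨h1, h2, h3⟩ := hinv x
    have := hv2M (v x) (u x) h1 h2 h3
    exact clamp_eq (by linarith [(abs_lt.mp this).1]) (by linarith [(abs_lt.mp this).2])
  have hud' : ∀ x, HasDerivAt u (v x) x := fun x => by have := hud x; rwa [hcv x] at this
  have hvd' : ∀ x, HasDerivAt v (fv c q (u x)) x := fun x => by
    have := hvd x; rwa [hcu x] at this
  -- global energy conservation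
  have henE : ∀ x, en x = E := by
    have hd : ∀ x, HasDerivAt en 0 x := fun x => energy_deriv (hud' x) (hvd' x)
    have hconst : ∀ x, en x = en 0 := by
      intro x
      have := is_const_of_deriv_eq_zero (fun y => (hd y).differentiableAt)
        (fun y => (hd y).deriv) x 0
      exact this
    intro x
    rw [hconst x, hen_def]
    simp only [hu0, hv0, hVaE]; norm_num
  -- reflection symmetry
  have hrefl : ∀ x₁, v x₁ = 0 → ∀ x, u (2*x₁ - x) = u x := by
    intro x₁ hvx₁ x
    set G : ℝ → ℝ × ℝ := fun y => (u (2*x₁ - y), -(v (2*x₁ - y))) with hG_def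
    have hGd : ∀ y, HasDerivAt G (vf (G y)) y := by
      intro y
      have hu1 : HasDerivAt (fun w => u (2*x₁ - w)) (-(v (2*x₁ - y))) y := by
        have hinner : HasDerivAt (fun w : ℝ => 2*x₁ - w) (-1) y := by
          simpa using (hasDerivAt_id y).const_sub (2*x₁)
        have := (hud' (2*x₁ - y)).comp y hinner
        exact this.congr_deriv (by ring)
      have hv1 : HasDerivAt (fun w => -(v (2*x₁ - w))) (fv c q (u (2*x₁ - y))) y := by
        have hinner : HasDerivAt (fun w : ℝ => 2*x₁ - w) (-1) y := by
          simpa using (hasDerivAt_id y).const_sub (2*x₁)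
        have := ((hvd' (2*x₁ - y)).comp y hinner).neg
        exact this.congr_deriv (by ring)
      have hval : vf (G y) = (-(v (2*x₁ - y)), fv c q (u (2*x₁ - y))) := by
        rw [hvf]
        simp only [hG_def]
        congr 1
        · have h1 : clamp M (v (2*x₁ - y)) = v (2*x₁ - y) := hcv _
          rw [clamp] at h1 ⊢
          rw [show -(v (2*x₁ - y)) = -(v (2*x₁ - y)) from rfl]
          -- use clamp of negative: since |v| < M
          have h5 := hv2M (v (2*x₁-y)) (u (2*x₁-y)) (hinv _).1 (hinv _).2.1 (hinv _).2.2
          have := abs_lt.mp h5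
          rw [min_eq_right (by linarith), max_eq_right (by linarith)]
        · congr 1
          exact hcu _
      rw [hval]
      exact hu1.prodMk hv1
    have hGx₁ : G x₁ = F x₁ := by
      show (u (2*x₁ - x₁), -(v (2*x₁ - x₁))) = F x₁
      rw [show 2*x₁ - x₁ = x₁ by ring, hvx₁, neg_zero, ← hvx₁]
    have hFG := global_unique hLip hFd hGd hGx₁.symm
    have := congrArg (fun f => (f x).1) hFG
    simpa [hG_def, hu_def] using this.symm
  exact ⟨u, v, hu0, hv0, hud', hvd', fun x => ⟨(hinv x).1, (hinv x).2.1⟩, henE, hrefl⟩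

lemma phi_mono {s g g' : ℝ} (hs : 0 < s) (h1 : 0 ≤ g) (h2 : g < g') (h3 : g' ≤ s/2) :
    s*g^2/2 - g^3/6 < s*g'^2/2 - g'^3/6 := by
  nlinarith [mul_pos (sub_pos.mpr h2) hs, sq_nonneg (g' - g), sq_nonneg (g' + g),
    mul_nonneg h1 (sub_pos.mpr h2).le, mul_pos (lt_of_le_of_lt h1 h2) (sub_pos.mpr h2)]

lemma psi_mono {s t t' : ℝ} (hs : 0 < s) (h1 : 0 ≤ t) (h2 : t < t') :
    s*t^2/2 + t^3/6 < s*t'^2/2 + t'^3/6 := by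
  have h5 : t^2 < t'^2 := by nlinarith
  have h6 : t^3 ≤ t'^3 := by nlinarith
  nlinarith [mul_lt_mul_of_pos_left h5 hs]
end
end Stmt7Aux

open Set Metric Stmt7Aux in
set_option maxHeartbeats 2000000 in
/-- Existence of nonconstant periodic (cnoidal) solutions of the KdV profile ODE
`T'' + T²/2 - cT = q` when `c² + 2q > 0`. -/
theorem stmt_7 (c q : ℝ) (h : 0 < c ^ 2 + 2 * q) :
    ∃ X > (0:ℝ), ∃ T : ℝ → ℝ, ContDiff ℝ 2 T ∧ Function.Periodic T X ∧
      (∃ x y, T x ≠ T y) ∧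
      ∀ x, deriv (deriv T) x + T x ^ 2 / 2 - c * T x = q := by
  obtain ⟨s, hs, hs2⟩ : ∃ s : ℝ, 0 < s ∧ s^2 = c^2 + 2*q :=
    ⟨Real.sqrt (c^2+2*q), Real.sqrt_pos.mpr h, Real.sq_sqrt h.le⟩
  obtain ⟨r, hr_def⟩ : ∃ r : ℝ, r = c + s := ⟨_, rfl⟩
  have hVval : ∀ z : ℝ, Vv c q z = Vv c q r + s*(z - r)^2/2 + (z - r)^3/6 := by
    intro z
    have h1 := Vv_id hs2 (z - (c + s))
    rw [show c + s + (z - (c + s)) = z by ring] at h1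
    rw [hr_def]
    exact h1
  have hfval : ∀ z : ℝ, fv c q z = -(s*(z - r)) - (z - r)^2/2 := by
    intro z
    have h1 := fv_id hs2 (z - (c + s))
    rw [show c + s + (z - (c + s)) = z by ring] at h1
    rw [hr_def]
    exact h1
  obtain ⟨a, ha_def⟩ : ∃ a : ℝ, a = r + s/8 := ⟨_, rfl⟩
  obtain ⟨E, hE_def⟩ : ∃ E : ℝ, E = Vv c q a := ⟨_, rfl⟩
  have hEv : E = Vv c q r + 25*s^3/3072 := by
    rw [hE_def, hVval a, ha_def]
    ring
  obtain ⟨β, hβmem, hβE⟩ : ∃ β ∈ Ioo (0:ℝ) (s/2), Vv c q (r - β) = E := by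
    have hcont : ContinuousOn (fun β : ℝ => Vv c q (r - β)) (Icc 0 (s/2)) :=
      ((Vv_cont c q).comp (continuous_const.sub continuous_id)).continuousOn
    have hmem : E ∈ Ioo (Vv c q (r - 0)) (Vv c q (r - s/2)) := by
      rw [sub_zero]
      constructor
      · rw [hEv]; nlinarith
      · rw [hVval (r - s/2), hEv]
        rw [show r - s/2 - r = -(s/2) by ring]
        nlinarith
    obtain ⟨β, hβmem, hβE⟩ := intermediate_value_Ioo (by positivity : (0:ℝ) ≤ s/2) hcont hmem
    exact ⟨β, hβmem, hβE⟩
  obtain ⟨hβ0, hβs⟩ := hβmem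
  obtain ⟨b, hb_def⟩ : ∃ b : ℝ, b = r - β := ⟨_, rfl⟩
  have hbE : Vv c q b = E := by rw [hb_def]; exact hβE
  have hra : r < a := by rw [ha_def]; linarith
  have hbr : b < r := by rw [hb_def]; linarith
  have hba : b ≤ a := by linarith
  have hbs2 : r - s/2 < b := by rw [hb_def]; linarith
  have hVR : ∀ z z' : ℝ, r ≤ z → z < z' → Vv c q z < Vv c q z' := by
    intro z z' h1 h2
    rw [hVval z, hVval z']
    have key := psi_mono (t := z - r) (t' := z' - r) hs (by linarith) (by linarith)
    linarith
  have hVL : ∀ z z' : ℝ, r - s/2 ≤ z' → z' < z → z ≤ r → Vv c q z < Vv c q z' := by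
    intro z z' h1 h2 h3
    rw [hVval z, hVval z']
    have key := phi_mono (g := r - z) (g' := r - z') hs (by linarith) (by linarith) (by linarith)
    nlinarith [key]
  have hVmin : ∀ z : ℝ, r - s/2 ≤ z → Vv c q r ≤ Vv c q z := by
    intro z hz
    rw [hVval z]
    nlinarith [sq_nonneg (z - r)]
  have hVint : ∀ z, b < z → z < a → Vv c q z < E := by
    intro z h1 h2
    rcases le_total z r with hc | hc
    · rw [← hbE]
      exact hVL z b hbs2.le h1 hc
    · rw [hE_def]
      exact hVR z a hc h2
  have hVmono : ∀ z, b - (s/2 - β) < z → z < a + (s/2 - β) → Vv c q z ≤ E → b ≤ z ∧ z ≤ a := by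
    intro z h1 h2 h3
    rw [hb_def] at h1
    constructor
    · by_contra hcon
      push_neg at hcon
      have h4 : Vv c q b < Vv c q z := hVL b z (by linarith) hcon (by linarith)
      rw [hbE] at h4
      linarith
    · by_contra hcon
      push_neg at hcon
      have h4 : Vv c q a < Vv c q z := hVR a z hra.le hcon
      rw [← hE_def] at h4
      linarith
  have hEr : 0 ≤ E - Vv c q r := by rw [hEv]; nlinarith
  obtain ⟨M, hM0, hMb, haM, hMw⟩ : ∃ M : ℝ, 0 < M ∧ -M < b ∧ a < M ∧
      ∀ w : ℝ, w^2 ≤ 2*(E - Vv c q r) → |w| < M := by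
    refine ⟨|a| + |b| + Real.sqrt (2*(E - Vv c q r)) + 1, ?_, ?_, ?_, ?_⟩
    · positivity
    · have h1 := neg_abs_le b
      have h2 := abs_nonneg a
      have h3 := Real.sqrt_nonneg (2*(E - Vv c q r))
      linarith
    · have h1 := le_abs_self a
      have h2 := abs_nonneg b
      have h3 := Real.sqrt_nonneg (2*(E - Vv c q r))
      linarith
    · intro w hw
      have h5 : |w| ≤ Real.sqrt (2*(E - Vv c q r)) := by
        rw [← Real.sqrt_sq_eq_abs]
        exact Real.sqrt_le_sqrt hw
      have h2 := abs_nonneg a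
      have h3 := abs_nonneg b
      linarith
  have hv2M : ∀ w z : ℝ, b ≤ z → z ≤ a → w^2/2 + Vv c q z ≤ E → |w| < M := by
    intro w z h1 h2 h3
    apply hMw
    nlinarith [hVmin z (by linarith)]
  obtain ⟨u, v, hu0, hv0, hud, hvd, hrange, hen, hrefl⟩ :=
    construct c q b a E M (s/2 - β) hM0 hMb haM hba hv2M (by linarith) hVmono hE_def.symm
  have hu_cont : Continuous u := continuous_iff_continuousAt.mpr fun x => (hud x).continuousAt
  have hv_cont : Continuous v := continuous_iff_continuousAt.mpr fun x => (hvd x).continuousAt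
  have hfva : fv c q a < 0 := by
    rw [hfval a, ha_def]
    rw [show r + s/8 - r = s/8 by ring]
    nlinarith
  -- existence of a turning point
  have hx₁ : ∃ x₁ > 0, v x₁ = 0 := by
    by_contra hcon
    push_neg at hcon
    obtain ⟨t, ht0, hvt⟩ : ∃ t > 0, v t < 0 := by
      have hslope := hasDerivAt_iff_tendsto_slope.mp (hvd 0)
      rw [hu0] at hslope
      have hev : ∀ᶠ y in nhdsWithin 0 {(0:ℝ)}ᶜ, slope v 0 y < 0 :=
        hslope.eventually_lt_const hfva
      have hev2 : ∀ᶠ y in nhdsWithin 0 (Ioi 0), slope v 0 y < 0 :=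
        hev.filter_mono (nhdsWithin_mono 0 (fun y hy => ne_of_gt hy))
      obtain ⟨t, hts, htmem⟩ := (hev2.and self_mem_nhdsWithin).exists
      refine ⟨t, htmem, ?_⟩
      rw [slope_def_field, hv0] at hts
      have ht0 : (0:ℝ) < t := htmem
      rw [div_neg_iff] at hts
      rcases hts with ⟨h1, h2⟩ | ⟨h1, h2⟩
      · linarith
      · linarith
    have hvneg : ∀ x, 0 < x → v x < 0 := by
      intro x hx
      rcases lt_trichotomy (v x) 0 with h1 | h1 | h1
      · exact h1
      · exact absurd h1 (hcon x hx)
      · exfalso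
        have h0m : (0:ℝ) ∈ uIcc (v t) (v x) := by
          rw [Set.mem_uIcc]
          left
          exact ⟨hvt.le, h1.le⟩
        obtain ⟨y, hy, hvy⟩ := intermediate_value_uIcc hv_cont.continuousOn h0m
        have hy0 : 0 < y := by
          rcases Set.mem_uIcc.mp hy with ⟨h2, _⟩ | ⟨h2, _⟩ <;> linarith
        exact hcon y hy0 hvy
    have hanti : StrictAntiOn u (Ici 0) := by
      apply strictAntiOn_of_deriv_neg (convex_Ici 0) hu_cont.continuousOn
      intro x hx
      rw [interior_Ici] at hx
      rw [(hud x).deriv]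
      exact hvneg x hx
    by_cases hcase : ∃ x₂, 0 < x₂ ∧ u x₂ ≤ r - β/2
    · obtain ⟨x₂, hx₂0, hx₂u⟩ := hcase
      obtain ⟨k, hk_def⟩ : ∃ k : ℝ, k = s*β/4 := ⟨_, rfl⟩
      have hk0 : 0 < k := by rw [hk_def]; positivity
      have hfl : ∀ z, b ≤ z → z ≤ r - β/2 → k ≤ fv c q z := by
        intro z h1 h2
        rw [hfval z, hk_def]
        rw [hb_def] at h1
        have h3 : -β ≤ z - r := by linarith
        have h4 : z - r ≤ -(β/2) := by linarith
        nlinarith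
      have hmono : MonotoneOn (fun x => v x - k*x) (Ici x₂) := by
        apply monotoneOn_of_deriv_nonneg (convex_Ici x₂)
        · exact (hv_cont.sub (continuous_const.mul continuous_id)).continuousOn
        · intro x _
          exact ((hvd x).sub ((hasDerivAt_id x).const_mul k)).differentiableAt.differentiableWithinAt
        · intro x hx
          rw [interior_Ici] at hx
          have hder : HasDerivAt (fun x => v x - k*x) (fv c q (u x) - k) x := by
            exact ((hvd x).sub ((hasDerivAt_id x).const_mul k)).congr_deriv (by ring)
          rw [hder.deriv]
          have h5 : u x ≤ u x₂ :=
            hanti.antitoneOn (le_of_lt hx₂0) (le_of_lt (lt_trans hx₂0 hx)) hx.le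
          have h6 := hfl (u x) (hrange x).1 (le_trans h5 hx₂u)
          linarith
      obtain ⟨x₃, hx₃def⟩ : ∃ x₃ : ℝ, x₃ = x₂ + (1 - v x₂)/k := ⟨_, rfl⟩
      have hvx₂ := hvneg x₂ hx₂0
      have hx₃2 : x₂ ≤ x₃ := by
        rw [hx₃def]
        have : 0 ≤ (1 - v x₂)/k := div_nonneg (by linarith) hk0.le
        linarith
      have hm := hmono self_mem_Ici (show x₃ ∈ Ici x₂ from hx₃2) hx₃2
      have hkx : k * (x₃ - x₂) = 1 - v x₂ := by
        rw [hx₃def]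
        field_simp
        ring
      have hvx₃ : 1 ≤ v x₃ := by
        simp only [] at hm
        nlinarith
      have := hvneg x₃ (by linarith)
      linarith
    · push_neg at hcase
      obtain ⟨b', hb'_def⟩ : ∃ b' : ℝ, b' = r - β/2 := ⟨_, rfl⟩
      have hcase' : ∀ x, 0 < x → b' < u x := by
        intro x hx
        rw [hb'_def]
        exact hcase x hx
      have hαb' : b' < u 1 := hcase' 1 one_pos
      have hαa : u 1 < a := by
        rw [← hu0]
        exact hanti self_mem_Ici (by norm_num : (1:ℝ) ∈ Ici 0) one_pos
      obtain ⟨z₀, hz₀mem, hz₀max⟩ :=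
        isCompact_Icc.exists_isMaxOn (nonempty_Icc.mpr hαb'.le) (Vv_cont c q).continuousOn
      obtain ⟨m, hm_def⟩ : ∃ m : ℝ, m = E - Vv c q z₀ := ⟨_, rfl⟩
      have hm0 : 0 < m := by
        have h1 : b < z₀ := by
          rw [hb_def]
          have := hz₀mem.1
          rw [hb'_def] at this
          linarith
        have h2 : z₀ < a := lt_of_le_of_lt hz₀mem.2 hαa
        have := hVint z₀ h1 h2
        rw [hm_def]
        linarith
      have hsq0 : 0 < Real.sqrt (2*m) := Real.sqrt_pos.mpr (by linarith)
      have hvle : ∀ x, 1 ≤ x → v x ≤ -Real.sqrt (2*m) := by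
        intro x hx
        have hx0 : 0 < x := by linarith
        have hu1 : u x ≤ u 1 := by
          rcases eq_or_lt_of_le hx with he | hlt
          · rw [← he]
          · exact (hanti (by norm_num : (1:ℝ) ∈ Ici 0) (show x ∈ Ici 0 by
              simp only [mem_Ici]; linarith) hlt).le
        have hu2 : b' ≤ u x := (hcase' x hx0).le
        have hVz : Vv c q (u x) ≤ Vv c q z₀ := (isMaxOn_iff.mp hz₀max) _ ⟨hu2, hu1⟩
        have henx := hen x
        have h7 : 2*m ≤ (v x)^2 := by rw [hm_def]; nlinarith
        have h8 : Real.sqrt (2*m) ≤ |v x| := by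
          rw [← Real.sqrt_sq_eq_abs]
          exact Real.sqrt_le_sqrt h7
        have h9 := hvneg x hx0
        rw [abs_of_neg h9] at h8
        linarith
      have hantiw : AntitoneOn (fun x => u x + Real.sqrt (2*m) * x) (Ici 1) := by
        apply antitoneOn_of_deriv_nonpos (convex_Ici 1)
        · exact (hu_cont.add (continuous_const.mul continuous_id)).continuousOn
        · intro x _
          exact ((hud x).add
            ((hasDerivAt_id x).const_mul (Real.sqrt (2*m)))).differentiableAt.differentiableWithinAt
        · intro x hx
          rw [interior_Ici] at hx
          have hder : HasDerivAt (fun x => u x + Real.sqrt (2*m) * x)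
              (v x + Real.sqrt (2*m)) x := by
            exact ((hud x).add ((hasDerivAt_id x).const_mul (Real.sqrt (2*m)))).congr_deriv (by ring)
          rw [hder.deriv]
          have := hvle x hx.le
          linarith
      obtain ⟨X, hX_def⟩ : ∃ X : ℝ, X = 1 + (u 1 - b')/Real.sqrt (2*m) := ⟨_, rfl⟩
      have hX1 : 1 ≤ X := by
        rw [hX_def]
        have : 0 ≤ (u 1 - b')/Real.sqrt (2*m) := div_nonneg (by linarith) hsq0.le
        linarith
      have hm2 := hantiw self_mem_Ici (show X ∈ Ici 1 from hX1) hX1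
      have hkey : Real.sqrt (2*m) * (X - 1) = u 1 - b' := by
        rw [hX_def]
        field_simp
        ring
      have hcontr : u X ≤ b' := by
        simp only [] at hm2
        nlinarith
      have := hcase' X (by linarith)
      linarith
  obtain ⟨x₁, hx₁0, hvx₁⟩ := hx₁
  have hu_even := hrefl 0 hv0
  have hu_refl := hrefl x₁ hvx₁
  have hper : Function.Periodic u (2*x₁) := by
    intro x
    have h1 := hu_refl (-x)
    have h2 := hu_even x
    rw [show 2*x₁ - (-x) = x + 2*x₁ by ring] at h1
    rw [show 2*(0:ℝ) - x = -x by ring] at h2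
    rw [h1, h2]
  have hderivu : deriv u = v := funext fun x => (hud x).deriv
  have hderivv : deriv v = fun x => fv c q (u x) := funext fun x => (hvd x).deriv
  have hT2 : ContDiff ℝ 2 u := by
    rw [show (2 : WithTop ℕ∞) = 1 + 1 by norm_num]
    rw [contDiff_succ_iff_deriv]
    refine ⟨fun x => (hud x).differentiableAt, by simp, ?_⟩
    rw [hderivu]
    rw [contDiff_one_iff_deriv]
    refine ⟨fun x => (hvd x).differentiableAt, ?_⟩
    rw [hderivv]
    have hfc : Continuous (fv c q) := by
      unfold fv
      exact (continuous_const.add (continuous_const.mul continuous_id)).sub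
        ((continuous_pow 2).div_const 2)
    exact hfc.comp hu_cont
  refine ⟨2*x₁, by linarith, u, hT2, hper, ?_, ?_⟩
  · by_contra hc
    push_neg at hc
    have hvz : ∀ x, v x = 0 := by
      intro x
      have hconst : u = fun _ => u 0 := funext fun y => hc y 0
      have hd : HasDerivAt (fun _ : ℝ => u 0) (v x) x := by
        rw [← hconst]
        exact hud x
      exact ((hasDerivAt_const x (u 0)).unique hd).symm
    have h1 : HasDerivAt (fun _ : ℝ => (0:ℝ)) (fv c q (u 0)) 0 := by
      have hd := hvd 0
      have hveq : v = fun _ => (0:ℝ) := funext hvz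
      rwa [hveq] at hd
    have h9 := (hasDerivAt_const (0:ℝ) (0:ℝ)).unique h1
    rw [hu0] at h9
    exact absurd h9.symm (ne_of_lt hfva)
  · intro x
    have hdd : deriv (deriv u) x = fv c q (u x) := by
      rw [hderivu, hderivv]
    rw [hdd]
    simp only [fv]
    ring
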